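/- (Classical Rosenthal inequality, upper bound) Let 2 ≤ p < ∞ and let (g_n)_{n≥1} be a finite sequence of independent mean-zero random variables in L_p(Ω, ℙ) on a probability space. Then ‖Σ_n g_n‖_p ≤ C_p [ (Σ_n ‖g_n‖_2²)^{1/2} + (Σ_n ‖g_n‖_p^p)^{1/p} ] for a constant C_p depending only on p. -/

import Mathlib

open MeasureTheory ProbabilityTheory ENNReal

noncomputable section


noncomputable def Kros (p : ℝ) : ℝ := p*(p-1)*2^p + 3^p + p*2^p

lemma Kros_ge_one {p : ℝ} (hp : 2 ≤ p) : 1 ≤ Kros p := by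
  have h0 : (0:ℝ) ≤ p := by linarith
  have h2p := Real.rpow_nonneg (by norm_num : (0:ℝ) ≤ 2) p
  have h1 : (1:ℝ) ≤ 3^p := by
    calc (1:ℝ) = 3^(0:ℝ) := by rw [Real.rpow_zero]
    _ ≤ 3^p := Real.rpow_le_rpow_of_exponent_le (by norm_num) h0
  have h2 : (0:ℝ) ≤ p*(p-1)*2^p := by
    have : (0:ℝ) ≤ p*(p-1) := by nlinarith
    exact mul_nonneg this h2p
  have h3 : (0:ℝ) ≤ p*2^p := mul_nonneg h0 h2p
  unfold Kros; linarith

lemma Kros_pos {p : ℝ} (hp : 2 ≤ p) : 0 < Kros p := lt_of_lt_of_le one_pos (Kros_ge_one hp)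

/-- Taylor-type bound on positive part. -/
lemma taylor_rpow {p : ℝ} (hp : 2 ≤ p) {a b : ℝ} (ha : 0 < a) (hb : 2*|b| ≤ a) :
    (a+b)^p ≤ a^p + p*a^(p-1)*b + p*(p-1)*2^p * (a^(p-2)*b^2) := by
  set s : Set ℝ := Set.uIcc 0 b with hs
  have hconv : Convex ℝ s := convex_uIcc 0 b
  have habs : ∀ u ∈ s, |u| ≤ |b| := by
    intro u hu
    rcases Set.mem_uIcc.1 hu with ⟨h1, h2⟩ | ⟨h1, h2⟩
    · rw [abs_of_nonneg h1]; exact le_trans h2 (le_abs_self b)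
    · rw [abs_of_nonpos h2]; linarith [neg_abs_le b]
  have hpos : ∀ u ∈ s, 0 < a + u := by
    intro u hu
    have h1 := habs u hu
    have h2 := neg_abs_le u
    linarith
  have hub : ∀ u ∈ s, a + u ≤ 2*a := by
    intro u hu
    have h1 := habs u hu
    have h2 := le_abs_self u
    linarith
  have hg : ∀ u ∈ s, HasDerivWithinAt (fun u => (a+u)^p) (p*(a+u)^(p-1)) s u := by
    intro u hu
    have h1 : HasDerivAt (fun u : ℝ => a + u) 1 u := (hasDerivAt_id u).const_add a
    have h2 := (Real.hasDerivAt_rpow_const (p := p) (Or.inl (hpos u hu).ne')).comp u h1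
    simpa [Function.comp_def] using h2.hasDerivWithinAt
  have hg' : ∀ u ∈ s, HasDerivWithinAt (fun u => p*(a+u)^(p-1)) (p*((p-1)*(a+u)^(p-2))) s u := by
    intro u hu
    have h1 : HasDerivAt (fun u : ℝ => a + u) 1 u := (hasDerivAt_id u).const_add a
    have h2 := (Real.hasDerivAt_rpow_const (p := p-1) (Or.inl (hpos u hu).ne')).comp u h1
    have h3 := h2.const_mul p
    have h4 : p - 1 - 1 = p - 2 := by ring
    simpa [h4] using h3.hasDerivWithinAt
  set L : ℝ := p*(p-1)*2^(p-2)*a^(p-2) with hL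
  have hpp : (0:ℝ) ≤ p*(p-1) := by nlinarith
  have h2nn := Real.rpow_nonneg (by norm_num : (0:ℝ) ≤ 2) (p-2)
  have hann := Real.rpow_nonneg ha.le (p-2)
  have hLnn : 0 ≤ L := by rw [hL]; exact mul_nonneg (mul_nonneg hpp h2nn) hann
  have hbound : ∀ u ∈ s, ‖p*((p-1)*(a+u)^(p-2))‖ ≤ L := by
    intro u hu
    have h1 : (0:ℝ) < a + u := hpos u hu
    have h2 : (a+u)^(p-2) ≤ (2*a)^(p-2) :=
      Real.rpow_le_rpow h1.le (hub u hu) (by linarith)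
    have h3 : (2*a)^(p-2) = 2^(p-2)*a^(p-2) := Real.mul_rpow (by norm_num) ha.le
    rw [Real.norm_eq_abs, abs_of_nonneg
      (mul_nonneg (by linarith) (mul_nonneg (by linarith) (Real.rpow_nonneg h1.le _)))]
    calc p*((p-1)*(a+u)^(p-2)) = (p*(p-1))*(a+u)^(p-2) := by ring
    _ ≤ (p*(p-1))*(2^(p-2)*a^(p-2)) := mul_le_mul_of_nonneg_left (h2.trans_eq h3) hpp
    _ = L := by rw [hL]; ring
  have hmvt1 : ∀ u ∈ s, |p*(a+u)^(p-1) - p*(a+0)^(p-1)| ≤ L * |b| := by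
    intro u hu
    have h0 : (0:ℝ) ∈ s := Set.left_mem_uIcc
    have h := hconv.norm_image_sub_le_of_norm_hasDerivWithin_le hg' hbound h0 hu
    simp only [Real.norm_eq_abs, sub_zero] at h
    exact h.trans (mul_le_mul_of_nonneg_left (habs u hu) hLnn)
  have hh : ∀ u ∈ s, HasDerivWithinAt (fun u => (a+u)^p - (p*(a+0)^(p-1))*u)
      (p*(a+u)^(p-1) - p*(a+0)^(p-1)) s u := by
    intro u hu
    have h1 := (hg u hu).sub (((hasDerivWithinAt_id u s).const_mul (p*(a+0)^(p-1))))
    simpa [mul_comm, Pi.sub_def] using h1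
  have key : (a+b)^p - (p*a^(p-1))*b - a^p ≤ L * b^2 := by
    have h1 : |((a+b)^p - (p*a^(p-1))*b) - a^p| ≤ L * |b| * |b| := by
      have h := hconv.norm_image_sub_le_of_norm_hasDerivWithin_le hh
        (fun u hu => by simpa [Real.norm_eq_abs] using hmvt1 u hu)
        Set.left_mem_uIcc Set.right_mem_uIcc
      simp only [Real.norm_eq_abs, add_zero, mul_zero, sub_zero] at h
      convert h using 2 <;> ring
    have h2 : L * |b| * |b| = L * b^2 := by rw [mul_assoc, abs_mul_abs_self]; ring
    rw [h2] at h1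
    linarith [(abs_le.1 h1).2]
  have hLe : L ≤ p*(p-1)*2^p * a^(p-2) := by
    have h4 : (2:ℝ)^(p-2) ≤ 2^p := Real.rpow_le_rpow_of_exponent_le (by norm_num) (by linarith)
    rw [hL]
    exact mul_le_mul_of_nonneg_right (mul_le_mul_of_nonneg_left h4 hpp) hann
  calc (a+b)^p ≤ a^p + p*a^(p-1)*b + L*b^2 := by linarith
  _ ≤ a^p + p*a^(p-1)*b + p*(p-1)*2^p*(a^(p-2)*b^2) := by
      have := mul_le_mul_of_nonneg_right hLe (sq_nonneg b)
      calc a^p + p*a^(p-1)*b + L*b^2 ≤ a^p + p*a^(p-1)*b + (p*(p-1)*2^p*a^(p-2))*b^2 := by linarith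
      _ = a^p + p*a^(p-1)*b + p*(p-1)*2^p*(a^(p-2)*b^2) := by ring

lemma Kros_def (p : ℝ) : Kros p = p*(p-1)*2^p + 3^p + p*2^p := rfl

lemma abs_mul_abs_rpow (x : ℝ) {q : ℝ} (hq : q + 1 ≠ 0) : |x| * |x|^q = |x|^(q+1) := by
  rw [Real.rpow_add' (abs_nonneg x) hq, Real.rpow_one, mul_comm]

lemma rpow_sub_one_two {c p : ℝ} (hc : 0 ≤ c) (hp : 2 ≤ p) : c^(p-1) = c * c^(p-2) := by
  have he : (p-2) + 1 = p - 1 := by ring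
  rw [← he, Real.rpow_add' hc (by rw [he]; intro h; nlinarith), Real.rpow_one, mul_comm]

/-- Full pointwise inequality. -/
lemma pointwise_ineq {p : ℝ} (hp : 2 ≤ p) (a b : ℝ) :
    |a+b|^p ≤ |a|^p + p * (a * |a|^(p-2)) * b
      + Kros p * (|a|^(p-2) * b^2 + |b|^p) := by
  have hK := Kros_def p
  have hpp : (0:ℝ) ≤ p*(p-1) := by nlinarith
  have h2nn := Real.rpow_nonneg (by norm_num : (0:ℝ) ≤ 2) p
  have h3nn := Real.rpow_nonneg (by norm_num : (0:ℝ) ≤ 3) p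
  have habsp2 := Real.rpow_nonneg (abs_nonneg a) (p-2)
  have hbp := Real.rpow_nonneg (abs_nonneg b) p
  by_cases hcase : 2*|b| ≤ |a|
  · -- Taylor case
    rcases lt_trichotomy a 0 with hneg | hzero | hposa
    · -- a < 0 : apply taylor to (-a, -b)
      have ha' : 0 < -a := by linarith
      have hb' : 2*|(-b)| ≤ -a := by rw [abs_neg]; rwa [abs_of_neg hneg] at hcase
      have h := taylor_rpow hp ha' hb'
      have he : -a + -b = -(a+b) := by ring
      rw [he] at h
      have habs : |a+b| = -(a+b) := by
        rcases abs_cases b with ⟨h1,h2⟩|⟨h1,h2⟩ <;>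
          (rw [abs_of_nonpos (by linarith [hcase, abs_of_neg hneg])])
      have hA : |a| = -a := abs_of_neg hneg
      rw [habs, hA]
      have h1 : (-a)^(p-1) = (-a) * (-a)^(p-2) := rpow_sub_one_two ha'.le hp
      rw [h1] at h
      have hb2 : (-b)^2 = b^2 := by ring
      rw [hb2] at h
      have hKge : p*(p-1)*2^p ≤ Kros p := by rw [hK]; nlinarith
      have hnn : (0:ℝ) ≤ (-a)^(p-2)*b^2 := mul_nonneg (Real.rpow_nonneg ha'.le _) (sq_nonneg b)
      have hKnn : (0:ℝ) ≤ Kros p := by rw [hK]; nlinarith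
      nlinarith [h, mul_le_mul_of_nonneg_right hKge hnn, mul_nonneg hKnn hbp]
    · -- a = 0 : then b = 0
      subst hzero
      simp only [abs_zero] at hcase
      have hb0 : b = 0 := abs_eq_zero.1 (le_antisymm (by linarith [abs_nonneg b]) (abs_nonneg b))
      subst hb0
      have hp0 : p ≠ 0 := by intro h; rw [h] at hp; norm_num at hp
      simp [Real.zero_rpow hp0]
    · -- a > 0
      have hb' : 2*|b| ≤ a := by rwa [abs_of_pos hposa] at hcase
      have h := taylor_rpow hp hposa hb'
      have habs : |a+b| = a+b := by
        rcases abs_cases b with ⟨h1,h2⟩|⟨h1,h2⟩ <;> (rw [abs_of_pos (by linarith)])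
      have hA : |a| = a := abs_of_pos hposa
      rw [habs, hA]
      have h1 : a^(p-1) = a * a^(p-2) := rpow_sub_one_two hposa.le hp
      rw [h1] at h
      have hKge : p*(p-1)*2^p ≤ Kros p := by rw [hK]; nlinarith
      have hnn : (0:ℝ) ≤ a^(p-2)*b^2 := mul_nonneg (Real.rpow_nonneg hposa.le _) (sq_nonneg b)
      have hKnn : (0:ℝ) ≤ Kros p := by rw [hK]; nlinarith
      nlinarith [h, mul_le_mul_of_nonneg_right hKge hnn, mul_nonneg hKnn hbp]
  · -- large b case
    push_neg at hcase
    have hbpos : 0 < |b| := by have := abs_nonneg a; linarith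
    -- |a+b|^p ≤ 3^p |b|^p
    have h1 : |a+b|^p ≤ 3^p * |b|^p := by
      have e1 : |a+b| ≤ 3*|b| := by
        calc |a+b| ≤ |a| + |b| := abs_add_le a b
        _ ≤ 3*|b| := by linarith
      calc |a+b|^p ≤ (3*|b|)^p := Real.rpow_le_rpow (abs_nonneg _) e1 (by linarith)
      _ = 3^p * |b|^p := Real.mul_rpow (by norm_num) (abs_nonneg b)
    -- linear term bound
    have h2 : |p * (a * |a|^(p-2)) * b| ≤ p * 2^p * |b|^p := by
      have e1 : |p * (a * |a|^(p-2)) * b| = p * (|a| * |a|^(p-2)) * |b| := by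
        rw [abs_mul, abs_mul, abs_mul, abs_of_nonneg (by linarith : (0:ℝ) ≤ p),
          abs_of_nonneg habsp2]
      rw [e1, abs_mul_abs_rpow a (by intro h; nlinarith)]
      have e2 : p - 2 + 1 = p - 1 := by ring
      rw [e2]
      have e3 : |a|^(p-1) ≤ (2*|b|)^(p-1) :=
        Real.rpow_le_rpow (abs_nonneg a) hcase.le (by linarith)
      have e4 : (2*|b|)^(p-1) = 2^(p-1)*|b|^(p-1) := Real.mul_rpow (by norm_num) (abs_nonneg b)
      have e5 : (2:ℝ)^(p-1) ≤ 2^p := Real.rpow_le_rpow_of_exponent_le (by norm_num) (by linarith)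
      have e6 : |b|^(p-1) * |b| = |b|^p := by
        rw [mul_comm, abs_mul_abs_rpow b (by intro h; nlinarith)]
        norm_num
      have e7 : |a|^(p-1) * |b| ≤ 2^p * |b|^p := by
        calc |a|^(p-1) * |b| ≤ (2^(p-1)*|b|^(p-1)) * |b| := by
              refine mul_le_mul_of_nonneg_right ?_ (abs_nonneg b)
              rw [← e4]; exact e3
        _ = 2^(p-1) * (|b|^(p-1) * |b|) := by ring
        _ ≤ 2^p * (|b|^(p-1)*|b|) := by
              refine mul_le_mul_of_nonneg_right e5 ?_
              exact mul_nonneg (Real.rpow_nonneg (abs_nonneg b) _) (abs_nonneg b)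
        _ = 2^p * |b|^p := by rw [e6]
      calc p * |a|^(p-1) * |b| = p * (|a|^(p-1) * |b|) := by ring
      _ ≤ p * (2^p * |b|^p) := mul_le_mul_of_nonneg_left e7 (by linarith)
      _ = p * 2^p * |b|^p := by ring
    have h3 := neg_abs_le (p * (a * |a|^(p-2)) * b)
    have habp := Real.rpow_nonneg (abs_nonneg a) p
    have hKb : Kros p * (|a|^(p-2) * b^2 + |b|^p) ≥ (3^p + p*2^p) * |b|^p := by
      have hKge : 3^p + p*2^p ≤ Kros p := by rw [hK]; nlinarith
      have hKnn : (0:ℝ) ≤ Kros p := by rw [hK]; nlinarith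
      have hnn2 : (0:ℝ) ≤ |a|^(p-2) * b^2 := mul_nonneg habsp2 (sq_nonneg b)
      nlinarith
    linarith

section prob
variable {Ω : Type} [MeasurableSpace Ω] {P : Measure Ω} [IsProbabilityMeasure P] {p : ℝ}

lemma ofReal_ne_zero' (hp : 2 ≤ p) : ENNReal.ofReal p ≠ 0 := by
  simp [ENNReal.ofReal_eq_zero]; linarith

lemma toReal_ofReal' (hp : 2 ≤ p) : (ENNReal.ofReal p).toReal = p :=
  ENNReal.toReal_ofReal (by linarith)

lemma integrable_abs_rpow {f : Ω → ℝ} (hf : MemLp f (ENNReal.ofReal p) P)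
    (hp : 2 ≤ p) {q : ℝ} (hq : 0 ≤ q) (hqp : q ≤ p) :
    Integrable (fun ω => |f ω| ^ q) P := by
  rcases eq_or_lt_of_le hq with hq0 | hqpos
  · simp only [← hq0, Real.rpow_zero]
    exact integrable_const 1
  · have hmem : MemLp f (ENNReal.ofReal q) P :=
      hf.mono_exponent (ENNReal.ofReal_le_ofReal hqp)
    have := hmem.integrable_norm_rpow (by simp [ENNReal.ofReal_eq_zero]; linarith)
      (by simp)
    simpa [Real.norm_eq_abs, ENNReal.toReal_ofReal hq] using this

lemma integrable_mul_abs_rpow {f : Ω → ℝ} (hf : MemLp f (ENNReal.ofReal p) P)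
    (hfm : Measurable f) (hp : 2 ≤ p) :
    Integrable (fun ω => f ω * |f ω| ^ (p-2)) P := by
  refine Integrable.mono' (integrable_abs_rpow hf hp (by linarith : (0:ℝ) ≤ p - 1) (by linarith))
    ?_ ?_
  · exact (by fun_prop : Measurable fun ω => f ω * |f ω| ^ (p-2)).aestronglyMeasurable
  · filter_upwards with ω
    rw [Real.norm_eq_abs, abs_mul, abs_of_nonneg (Real.rpow_nonneg (abs_nonneg _) _)]
    rw [abs_mul_abs_rpow (f ω) (by intro h; nlinarith : (p-2) + 1 ≠ 0)]
    have : p - 2 + 1 = p - 1 := by ring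
    rw [this]

/-- Key recursion step. -/
lemma step_ineq (hp : 2 ≤ p) {X Y : Ω → ℝ}
    (hX : MemLp X (ENNReal.ofReal p) P) (hY : MemLp Y (ENNReal.ofReal p) P)
    (hXm : Measurable X) (hYm : Measurable Y)
    (hind : IndepFun X Y P) (hY0 : ∫ ω, Y ω ∂P = 0) :
    ∫ ω, |X ω + Y ω|^p ∂P ≤ ∫ ω, |X ω|^p ∂P
      + Kros p * ((∫ ω, |X ω|^(p-2) ∂P) * (∫ ω, |Y ω|^(2:ℝ) ∂P) + ∫ ω, |Y ω|^p ∂P) := by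
  have hp0 : (0:ℝ) < p := by linarith
  have hpne : ENNReal.ofReal p ≠ 0 := ofReal_ne_zero' hp
  have htR := toReal_ofReal' hp
  -- integrabilities
  have IXp : Integrable (fun ω => |X ω|^p) P := integrable_abs_rpow hX hp hp0.le le_rfl
  have IYp : Integrable (fun ω => |Y ω|^p) P := integrable_abs_rpow hY hp hp0.le le_rfl
  have IX2 : Integrable (fun ω => |X ω|^(p-2)) P :=
    integrable_abs_rpow hX hp (by linarith) (by linarith)
  have IY2 : Integrable (fun ω => |Y ω|^(2:ℝ)) P :=
    integrable_abs_rpow hY hp (by norm_num) hp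
  have IXY : Integrable (fun ω => |X ω + Y ω|^p) P :=
    integrable_abs_rpow (hX.add hY) hp hp0.le le_rfl
  have IXmul : Integrable (fun ω => X ω * |X ω| ^ (p-2)) P :=
    integrable_mul_abs_rpow hX hXm hp
  have IY1 : Integrable Y P := hY.integrable (by
    rw [← ENNReal.ofReal_one]; exact ENNReal.ofReal_le_ofReal (by linarith))
  -- independence of composed functions
  have hφm : Measurable (fun x : ℝ => x * |x| ^ (p-2)) := by fun_prop
  have hψm : Measurable (fun x : ℝ => |x| ^ (p-2)) := by fun_prop
  have hχm : Measurable (fun x : ℝ => |x| ^ (2:ℝ)) := by fun_prop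
  have hind1 : IndepFun (fun ω => X ω * |X ω| ^ (p-2)) Y P := by
    have := hind.comp hφm measurable_id
    exact this
  have hind2 : IndepFun (fun ω => |X ω| ^ (p-2)) (fun ω => |Y ω| ^ (2:ℝ)) P :=
    hind.comp hψm hχm
  -- product integrals
  have hmul1 : ∫ ω, (X ω * |X ω| ^ (p-2)) * Y ω ∂P = 0 := by
    have h : ∫ ω, (X ω * |X ω| ^ (p-2)) * Y ω ∂P
        = (∫ ω, X ω * |X ω| ^ (p-2) ∂P) * ∫ ω, Y ω ∂P :=
      hind1.integral_fun_mul_eq_mul_integral IXmul.1 IY1.1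
    rw [h, hY0, mul_zero]
  have hmul2 : ∫ ω, (|X ω| ^ (p-2)) * (|Y ω| ^ (2:ℝ)) ∂P
      = (∫ ω, |X ω|^(p-2) ∂P) * (∫ ω, |Y ω|^(2:ℝ) ∂P) :=
    (hind2.integral_fun_mul_eq_mul_integral IX2.1 IY2.1 : _)
  -- integrable products
  have IP1 : Integrable (fun ω => (X ω * |X ω| ^ (p-2)) * Y ω) P :=
    (hind1.integrable_mul IXmul IY1 : _)
  have IP2 : Integrable (fun ω => (|X ω| ^ (p-2)) * (|Y ω| ^ (2:ℝ))) P :=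
    (hind2.integrable_mul IX2 IY2 : _)
  -- pointwise bound
  have hpt : ∀ ω, |X ω + Y ω|^p ≤ |X ω|^p + p * ((X ω * |X ω|^(p-2)) * Y ω)
      + Kros p * ((|X ω|^(p-2) * |Y ω|^(2:ℝ)) + |Y ω|^p) := by
    intro ω
    have h := pointwise_ineq hp (X ω) (Y ω)
    have h2 : |Y ω|^(2:ℝ) = (Y ω)^2 := by
      rw [show ((2:ℝ)) = ((2:ℕ):ℝ) by norm_num, Real.rpow_natCast, sq_abs]
    rw [h2]
    calc |X ω + Y ω|^p ≤ |X ω|^p + p * (X ω * |X ω|^(p-2)) * (Y ω)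
        + Kros p * (|X ω|^(p-2) * (Y ω)^2 + |Y ω|^p) := h
    _ = |X ω|^p + p * ((X ω * |X ω|^(p-2)) * Y ω)
        + Kros p * ((|X ω|^(p-2) * (Y ω)^2) + |Y ω|^p) := by ring
  -- integrate
  have hKnn : (0:ℝ) ≤ Kros p := le_trans zero_le_one (Kros_ge_one hp)
  have hRHS : Integrable (fun ω => |X ω|^p + p * ((X ω * |X ω|^(p-2)) * Y ω)
      + Kros p * ((|X ω|^(p-2) * |Y ω|^(2:ℝ)) + |Y ω|^p)) P := by
    exact (IXp.add (IP1.const_mul p)).add ((IP2.add IYp).const_mul (Kros p))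
  have hmono := integral_mono IXY hRHS (fun ω => hpt ω)
  have hAB : Integrable (fun a => |X a|^p + p * ((X a * |X a|^(p-2)) * Y a)) P :=
    IXp.add (IP1.const_mul p)
  have hC : Integrable (fun a => Kros p * ((|X a|^(p-2) * |Y a|^(2:ℝ)) + |Y a|^p)) P :=
    (IP2.add IYp).const_mul (Kros p)
  have e1 : (∫ a, (|X a|^p + p * ((X a * |X a|^(p-2)) * Y a)
      + Kros p * ((|X a|^(p-2) * |Y a|^(2:ℝ)) + |Y a|^p)) ∂P)
      = (∫ a, (|X a|^p + p * ((X a * |X a|^(p-2)) * Y a)) ∂P)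
      + ∫ a, Kros p * ((|X a|^(p-2) * |Y a|^(2:ℝ)) + |Y a|^p) ∂P :=
    integral_add hAB hC
  have e2 : (∫ a, (|X a|^p + p * ((X a * |X a|^(p-2)) * Y a)) ∂P)
      = (∫ a, |X a|^p ∂P) + ∫ a, p * ((X a * |X a|^(p-2)) * Y a) ∂P :=
    integral_add IXp (IP1.const_mul p)
  have e3 : (∫ a, p * ((X a * |X a|^(p-2)) * Y a) ∂P)
      = p * ∫ a, (X a * |X a|^(p-2)) * Y a ∂P := integral_const_mul _ _
  have e4 : (∫ a, Kros p * ((|X a|^(p-2) * |Y a|^(2:ℝ)) + |Y a|^p) ∂P)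
      = Kros p * ∫ a, ((|X a|^(p-2) * |Y a|^(2:ℝ)) + |Y a|^p) ∂P := integral_const_mul _ _
  have e5 : (∫ a, ((|X a|^(p-2) * |Y a|^(2:ℝ)) + |Y a|^p) ∂P)
      = (∫ a, |X a|^(p-2) * |Y a|^(2:ℝ) ∂P) + ∫ a, |Y a|^p ∂P := integral_add IP2 IYp
  rw [e1, e2, e3, e4, e5, hmul1, hmul2, mul_zero, add_zero] at hmono
  exact hmono

/-- Hölder / Lp-monotonicity step. -/
lemma holder_step (hp : 2 ≤ p) {f : Ω → ℝ} (hf : MemLp f (ENNReal.ofReal p) P) :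
    ∫ ω, |f ω|^(p-2) ∂P ≤ (∫ ω, |f ω|^p ∂P) ^ ((p-2)/p) := by
  rcases eq_or_lt_of_le hp with h2 | hlt
  · simp [← h2]
  · have hp0 : (0:ℝ) < p := by linarith
    have hq0 : (0:ℝ) < p - 2 := by linarith
    have hmem : MemLp f (ENNReal.ofReal (p-2)) P :=
      hf.mono_exponent (ENNReal.ofReal_le_ofReal (by linarith))
    have hle := eLpNorm_le_eLpNorm_of_exponent_le
      (ENNReal.ofReal_le_ofReal (by linarith : p - 2 ≤ p)) hf.1 (μ := P)
    rw [hmem.eLpNorm_eq_integral_rpow_norm (by simp [ENNReal.ofReal_eq_zero]; linarith) (by simp),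
      hf.eLpNorm_eq_integral_rpow_norm (by simp [ENNReal.ofReal_eq_zero]; linarith) (by simp)]
      at hle
    rw [ENNReal.ofReal_le_ofReal_iff (Real.rpow_nonneg
      (integral_nonneg fun ω => Real.rpow_nonneg (norm_nonneg _) _) _)] at hle
    rw [ENNReal.toReal_ofReal hq0.le, ENNReal.toReal_ofReal hp0.le] at hle
    have h1 : ((∫ ω, ‖f ω‖^(p-2) ∂P) ^ (p-2)⁻¹) ^ (p-2)
        ≤ ((∫ ω, ‖f ω‖^p ∂P) ^ p⁻¹) ^ (p-2) := by
      refine Real.rpow_le_rpow ?_ hle hq0.le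
      exact Real.rpow_nonneg (integral_nonneg fun ω => Real.rpow_nonneg (norm_nonneg _) _) _
    rw [Real.rpow_inv_rpow (integral_nonneg fun ω => Real.rpow_nonneg (norm_nonneg _) _)
      hq0.ne'] at h1
    rw [← Real.rpow_mul (integral_nonneg fun ω => Real.rpow_nonneg (norm_nonneg _) _)] at h1
    have : p⁻¹ * (p-2) = (p-2)/p := by field_simp
    rw [this] at h1
    simpa [Real.norm_eq_abs] using h1

end prob

lemma solve_ineq {p K R A B : ℝ} (hp : 2 ≤ p) (hK : 1 ≤ K) (hA : 0 ≤ A) (hB : 0 ≤ B)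
    (hR : 0 ≤ R) (h : R ≤ K * (R^((p-2)/p) * A + B)) :
    R^(1/p) ≤ (2*K) * (A^((1:ℝ)/2) + B^(1/p)) := by
  have hp0 : (0:ℝ) < p := by linarith
  have h2K : (1:ℝ) ≤ 2*K := by linarith
  have hA2 : (0:ℝ) ≤ A^((1:ℝ)/2) := Real.rpow_nonneg hA _
  have hB2 : (0:ℝ) ≤ B^(1/p) := Real.rpow_nonneg hB _
  by_cases hRB : R ≤ 2*K*B
  · have h1 : R^(1/p) ≤ (2*K*B)^(1/p) :=
      Real.rpow_le_rpow hR hRB (by positivity)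
    have h2 : (2*K*B)^(1/p) = (2*K)^(1/p) * B^(1/p) :=
      Real.mul_rpow (by linarith) hB
    have h3 : (2*K)^(1/p) ≤ (2*K)^(1:ℝ) :=
      Real.rpow_le_rpow_of_exponent_le h2K (by rw [div_le_one hp0]; linarith)
    rw [Real.rpow_one] at h3
    calc R^(1/p) ≤ (2*K)^(1/p) * B^(1/p) := by rw [← h2]; exact h1
    _ ≤ (2*K) * B^(1/p) := mul_le_mul_of_nonneg_right h3 hB2
    _ ≤ (2*K) * (A^((1:ℝ)/2) + B^(1/p)) := by nlinarith
  · push_neg at hRB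
    have hRpos : 0 < R := lt_of_le_of_lt (by positivity) hRB
    have h1 : R/2 ≤ K * R^((p-2)/p) * A := by nlinarith
    have h2 : R^((2:ℝ)/p) ≤ 2*K*A := by
      have e1 : R = R^((p-2)/p) * R^((2:ℝ)/p) := by
        rw [← Real.rpow_add hRpos]
        norm_num
        rw [← add_div, sub_add_cancel, div_self hp0.ne', Real.rpow_one]
      have hq : (0:ℝ) < R^((p-2)/p) := Real.rpow_pos_of_pos hRpos _
      have h3 : R^((p-2)/p) * R^((2:ℝ)/p) ≤ R^((p-2)/p) * (2*K*A) := by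
        calc R^((p-2)/p) * R^((2:ℝ)/p) = R := e1.symm
        _ ≤ 2*(K * R^((p-2)/p) * A) := by linarith
        _ = R^((p-2)/p) * (2*K*A) := by ring
      exact le_of_mul_le_mul_left h3 hq
    have h4 : R^(1/p) = (R^((2:ℝ)/p))^((1:ℝ)/2) := by
      rw [← Real.rpow_mul hR]
      congr 1
      field_simp
    have h5 : (R^((2:ℝ)/p))^((1:ℝ)/2) ≤ (2*K*A)^((1:ℝ)/2) :=
      Real.rpow_le_rpow (Real.rpow_nonneg hR _) h2 (by norm_num)
    have h6 : (2*K*A)^((1:ℝ)/2) = (2*K)^((1:ℝ)/2) * A^((1:ℝ)/2) :=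
      Real.mul_rpow (by linarith) hA
    have h7 : (2*K)^((1:ℝ)/2) ≤ 2*K := by
      have := Real.rpow_le_rpow_of_exponent_le h2K (by norm_num : (1:ℝ)/2 ≤ 1)
      rwa [Real.rpow_one] at this
    calc R^(1/p) = (R^((2:ℝ)/p))^((1:ℝ)/2) := h4
    _ ≤ (2*K)^((1:ℝ)/2) * A^((1:ℝ)/2) := by rw [← h6]; exact h5
    _ ≤ (2*K) * A^((1:ℝ)/2) := mul_le_mul_of_nonneg_right h7 hA2
    _ ≤ (2*K) * (A^((1:ℝ)/2) + B^(1/p)) := by nlinarith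

lemma iIndepFun_of_ae_eq {Ω : Type} [MeasurableSpace Ω] {P : Measure Ω} {ι : Type*}
    {f f' : ι → Ω → ℝ}
    (h : iIndepFun f P)
    (hae : ∀ i, f i =ᵐ[P] f' i) :
    iIndepFun f' P := by
  rw [iIndepFun_iff_measure_inter_preimage_eq_mul] at h ⊢
  intro S sets hsets
  have hpre : ∀ i ∈ S, (f' i ⁻¹' sets i : Set Ω) =ᵐ[P] (f i ⁻¹' sets i : Set Ω) := by
    intro i _
    filter_upwards [hae i] with ω hω
    change (f' i ω ∈ sets i) = (f i ω ∈ sets i)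
    rw [hω]
  have hint : ((⋂ i ∈ S, f' i ⁻¹' sets i : Set Ω)) =ᵐ[P] (⋂ i ∈ S, f i ⁻¹' sets i : Set Ω) := by
    have hall : ∀ᵐ ω ∂P, ∀ i ∈ (↑S : Set ι),
        (ω ∈ (f' i ⁻¹' sets i : Set Ω) ↔ ω ∈ (f i ⁻¹' sets i : Set Ω)) := by
      rw [MeasureTheory.ae_ball_iff S.countable_toSet]
      intro i hi
      filter_upwards [hpre i (Finset.mem_coe.1 hi)] with ω hω using iff_of_eq hω
    rw [Filter.eventuallyEq_set]
    filter_upwards [hall] with ω hω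
    simp only [Set.mem_iInter]
    constructor
    · intro hh i hi; exact (hω i (Finset.mem_coe.2 hi)).1 (hh i hi)
    · intro hh i hi; exact (hω i (Finset.mem_coe.2 hi)).2 (hh i hi)
  rw [measure_congr hint, h S hsets]
  exact Finset.prod_congr rfl fun i hi => (measure_congr (hpre i hi)).symm

section prob
variable {Ω : Type} [MeasurableSpace Ω] {P : Measure Ω} [IsProbabilityMeasure P] {p : ℝ}
lemma memℒp_sum_fun {N : ℕ} {g : Fin N → Ω → ℝ} (hmem : ∀ n, MemLp (g n) (ENNReal.ofReal p) P)
    (s : Finset (Fin N)) : MemLp (fun ω => ∑ i ∈ s, g i ω) (ENNReal.ofReal p) P := by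
  have h := memLp_finset_sum' s (fun i (_ : i ∈ s) => hmem i)
  have e : (∑ i ∈ s, g i) = fun ω => ∑ i ∈ s, g i ω := by funext ω; simp
  rwa [e] at h

lemma rosenthal_rec (hp : 2 ≤ p) {N : ℕ} {g : Fin N → Ω → ℝ}
    (hind : iIndepFun g P)
    (hmem : ∀ n, MemLp (g n) (ENNReal.ofReal p) P)
    (hmeas : ∀ n, Measurable (g n))
    (hzero : ∀ n, ∫ ω, g n ω ∂P = 0)
    {R : ℝ} (hR0 : 0 ≤ R)
    (hIR : ∀ s : Finset (Fin N), ∫ ω, |∑ i ∈ s, g i ω|^p ∂P ≤ R) :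
    ∀ s : Finset (Fin N), ∫ ω, |∑ i ∈ s, g i ω|^p ∂P
      ≤ Kros p * (R^((p-2)/p) * (∑ i ∈ s, ∫ ω, |g i ω|^(2:ℝ) ∂P)
          + ∑ i ∈ s, ∫ ω, |g i ω|^p ∂P) := by
  have hp0 : (0:ℝ) < p := by linarith
  have hKnn : (0:ℝ) ≤ Kros p := le_trans zero_le_one (Kros_ge_one hp)
  have hRq : (0:ℝ) ≤ R^((p-2)/p) := Real.rpow_nonneg hR0 _
  have hV : ∀ i, (0:ℝ) ≤ ∫ ω, |g i ω|^(2:ℝ) ∂P :=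
    fun i => integral_nonneg fun ω => Real.rpow_nonneg (abs_nonneg _) _
  have hW : ∀ i, (0:ℝ) ≤ ∫ ω, |g i ω|^p ∂P :=
    fun i => integral_nonneg fun ω => Real.rpow_nonneg (abs_nonneg _) _
  intro s
  induction s using Finset.induction_on with
  | empty =>
      simp only [Finset.sum_empty, abs_zero, Real.zero_rpow hp0.ne', integral_zero,
        mul_zero, add_zero, le_refl]
  | @insert a s ha ih =>
      have hX := memℒp_sum_fun hmem s
      have hXm : Measurable (fun ω => ∑ i ∈ s, g i ω) :=
        Finset.measurable_sum s (fun i _ => hmeas i)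
      have hindXY : IndepFun (fun ω => ∑ i ∈ s, g i ω) (g a) P := by
        have h := hind.indepFun_finsetSum_of_notMem hmeas ha
        have e : (∑ j ∈ s, g j) = fun ω => ∑ j ∈ s, g j ω := by funext ω; simp
        rwa [e] at h
      have hstep := step_ineq hp hX (hmem a) hXm (hmeas a) hindXY (hzero a)
      have esum : ∀ ω : Ω, |∑ i ∈ insert a s, g i ω|^p
          = |(∑ i ∈ s, g i ω) + g a ω|^p := by
        intro ω
        rw [Finset.sum_insert ha, add_comm]
      have hI1 : ∫ ω, |∑ i ∈ insert a s, g i ω|^p ∂P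
          = ∫ ω, |(∑ i ∈ s, g i ω) + g a ω|^p ∂P := by
        congr 1; funext ω; exact esum ω
      have hhold : ∫ ω, |∑ i ∈ s, g i ω|^(p-2) ∂P
          ≤ R^((p-2)/p) := by
        calc ∫ ω, |∑ i ∈ s, g i ω|^(p-2) ∂P
            ≤ (∫ ω, |∑ i ∈ s, g i ω|^p ∂P) ^ ((p-2)/p) := holder_step hp hX
        _ ≤ R^((p-2)/p) := Real.rpow_le_rpow
            (integral_nonneg fun ω => Real.rpow_nonneg (abs_nonneg _) _) (hIR s)
            (by apply div_nonneg <;> linarith)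
      have hmono : (∫ ω, |∑ i ∈ s, g i ω|^(p-2) ∂P) * (∫ ω, |g a ω|^(2:ℝ) ∂P)
          ≤ R^((p-2)/p) * (∫ ω, |g a ω|^(2:ℝ) ∂P) :=
        mul_le_mul_of_nonneg_right hhold (hV a)
      rw [hI1]
      calc ∫ ω, |(∑ i ∈ s, g i ω) + g a ω|^p ∂P
          ≤ ∫ ω, |∑ i ∈ s, g i ω|^p ∂P
            + Kros p * ((∫ ω, |∑ i ∈ s, g i ω|^(p-2) ∂P) * (∫ ω, |g a ω|^(2:ℝ) ∂P)
              + ∫ ω, |g a ω|^p ∂P) := hstep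
      _ ≤ Kros p * (R^((p-2)/p) * (∑ i ∈ s, ∫ ω, |g i ω|^(2:ℝ) ∂P)
            + ∑ i ∈ s, ∫ ω, |g i ω|^p ∂P)
          + Kros p * (R^((p-2)/p) * (∫ ω, |g a ω|^(2:ℝ) ∂P) + ∫ ω, |g a ω|^p ∂P) := by
          have := mul_le_mul_of_nonneg_left (add_le_add hmono (le_refl (∫ ω, |g a ω|^p ∂P))) hKnn
          linarith [ih]
      _ = Kros p * (R^((p-2)/p) * (∑ i ∈ insert a s, ∫ ω, |g i ω|^(2:ℝ) ∂P)
            + ∑ i ∈ insert a s, ∫ ω, |g i ω|^p ∂P) := by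
          rw [Finset.sum_insert ha, Finset.sum_insert ha]; ring
end prob

noncomputable section

section prob
variable {Ω : Type} [MeasurableSpace Ω] {P : Measure Ω} [IsProbabilityMeasure P] {p : ℝ}

lemma eLpNorm_toReal_eq {f : Ω → ℝ} {q : ℝ} (hq : 0 < q)
    (hf : MemLp f (ENNReal.ofReal q) P) :
    (eLpNorm f (ENNReal.ofReal q) P).toReal = (∫ ω, |f ω|^q ∂P) ^ q⁻¹ := by
  rw [hf.eLpNorm_eq_integral_rpow_norm (by simp [ENNReal.ofReal_eq_zero]; linarith) (by simp)]
  rw [ENNReal.toReal_ofReal (Real.rpow_nonneg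
    (integral_nonneg fun ω => Real.rpow_nonneg (norm_nonneg _) _) _)]
  rw [ENNReal.toReal_ofReal hq.le]
  simp only [Real.norm_eq_abs]

theorem rosenthal_aux (p : ℝ) (hp : 2 ≤ p)
    (Ω : Type) (mΩ : MeasurableSpace Ω) (P : Measure Ω) (hprob : IsProbabilityMeasure P)
    (N : ℕ) (g : Fin N → Ω → ℝ)
    (hind : iIndepFun g P)
    (hmem : ∀ n, MemLp (g n) (ENNReal.ofReal p) P)
    (hmeas : ∀ n, Measurable (g n))
    (hzero : ∀ n, ∫ ω, g n ω ∂P = 0) :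
    (eLpNorm (fun ω => ∑ n, g n ω) (ENNReal.ofReal p) P).toReal ≤
      (2 * Kros p) * ((∑ n, ((eLpNorm (g n) 2 P).toReal) ^ (2:ℝ)) ^ ((1:ℝ)/2) +
           (∑ n, ((eLpNorm (g n) (ENNReal.ofReal p) P).toReal) ^ p) ^ (1/p)) := by
  have hp0 : (0:ℝ) < p := by linarith
  have hInn : ∀ s : Finset (Fin N), (0:ℝ) ≤ ∫ ω, |∑ i ∈ s, g i ω|^p ∂P :=
    fun s => integral_nonneg fun ω => Real.rpow_nonneg (abs_nonneg _) _
  have hne : (Finset.univ : Finset (Finset (Fin N))).Nonempty := ⟨∅, Finset.mem_univ _⟩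
  set R : ℝ := Finset.univ.sup' hne (fun s : Finset (Fin N) => ∫ ω, |∑ i ∈ s, g i ω|^p ∂P)
    with hRdef
  have hIR : ∀ s : Finset (Fin N), ∫ ω, |∑ i ∈ s, g i ω|^p ∂P ≤ R := by
    intro s
    rw [hRdef]
    exact Finset.le_sup' (fun s : Finset (Fin N) => ∫ ω, |∑ i ∈ s, g i ω|^p ∂P)
      (Finset.mem_univ s)
  have hR0 : 0 ≤ R := le_trans (hInn ∅) (hIR ∅)
  have hrec := rosenthal_rec hp hind hmem hmeas hzero hR0 hIR
  -- get R ≤ K (R^q A + B)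
  set A : ℝ := ∑ n, ∫ ω, |g n ω|^(2:ℝ) ∂P with hAdef
  set B : ℝ := ∑ n, ∫ ω, |g n ω|^p ∂P with hBdef
  have hV : ∀ i, (0:ℝ) ≤ ∫ ω, |g i ω|^(2:ℝ) ∂P :=
    fun i => integral_nonneg fun ω => Real.rpow_nonneg (abs_nonneg _) _
  have hW : ∀ i, (0:ℝ) ≤ ∫ ω, |g i ω|^p ∂P :=
    fun i => integral_nonneg fun ω => Real.rpow_nonneg (abs_nonneg _) _
  have hA0 : 0 ≤ A := Finset.sum_nonneg fun i _ => hV i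
  have hB0 : 0 ≤ B := Finset.sum_nonneg fun i _ => hW i
  have hKnn : (0:ℝ) ≤ Kros p := le_trans zero_le_one (Kros_ge_one hp)
  have hRq : (0:ℝ) ≤ R^((p-2)/p) := Real.rpow_nonneg hR0 _
  have hRle : R ≤ Kros p * (R^((p-2)/p) * A + B) := by
    obtain ⟨t₀, -, hRt⟩ := Finset.exists_mem_eq_sup' hne
      (fun s : Finset (Fin N) => ∫ ω, |∑ i ∈ s, g i ω|^p ∂P)
    have h1 := hrec t₀
    have h2 : ∑ i ∈ t₀, ∫ ω, |g i ω|^(2:ℝ) ∂P ≤ A :=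
      Finset.sum_le_sum_of_subset_of_nonneg (Finset.subset_univ t₀) (fun i _ _ => hV i)
    have h3 : ∑ i ∈ t₀, ∫ ω, |g i ω|^p ∂P ≤ B :=
      Finset.sum_le_sum_of_subset_of_nonneg (Finset.subset_univ t₀) (fun i _ _ => hW i)
    have h4 : Kros p * (R^((p-2)/p) * (∑ i ∈ t₀, ∫ ω, |g i ω|^(2:ℝ) ∂P)
        + ∑ i ∈ t₀, ∫ ω, |g i ω|^p ∂P) ≤ Kros p * (R^((p-2)/p) * A + B) := by
      refine mul_le_mul_of_nonneg_left ?_ hKnn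
      refine add_le_add (mul_le_mul_of_nonneg_left h2 hRq) h3
    calc R = ∫ ω, |∑ i ∈ t₀, g i ω|^p ∂P := hRt
    _ ≤ _ := le_trans h1 h4
  have hsolve := solve_ineq hp (Kros_ge_one hp) hA0 hB0 hR0 hRle
  -- LHS
  have hLHS : (eLpNorm (fun ω => ∑ n, g n ω) (ENNReal.ofReal p) P).toReal
      = (∫ ω, |∑ n, g n ω|^p ∂P) ^ p⁻¹ :=
    eLpNorm_toReal_eq hp0 (memℒp_sum_fun hmem Finset.univ)
  have hLHS2 : (∫ ω, |∑ n, g n ω|^p ∂P) ^ p⁻¹ ≤ R ^ (1/p) := by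
    rw [one_div]
    exact Real.rpow_le_rpow (hInn Finset.univ) (hIR Finset.univ) (by positivity)
  -- RHS terms
  have hT2 : ∀ n, ((eLpNorm (g n) 2 P).toReal) ^ (2:ℝ) = ∫ ω, |g n ω|^(2:ℝ) ∂P := by
    intro n
    have hmem2 : MemLp (g n) (ENNReal.ofReal 2) P :=
      (hmem n).mono_exponent (ENNReal.ofReal_le_ofReal hp)
    have h2 : ENNReal.ofReal (2:ℝ) = (2 : ℝ≥0∞) := by
      rw [ENNReal.ofReal_ofNat]
    rw [← h2, eLpNorm_toReal_eq (by norm_num) hmem2,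
      Real.rpow_inv_rpow (integral_nonneg fun ω => Real.rpow_nonneg (abs_nonneg _) _)
        (by norm_num)]
  have hTp : ∀ n, ((eLpNorm (g n) (ENNReal.ofReal p) P).toReal) ^ p = ∫ ω, |g n ω|^p ∂P := by
    intro n
    rw [eLpNorm_toReal_eq hp0 (hmem n),
      Real.rpow_inv_rpow (integral_nonneg fun ω => Real.rpow_nonneg (abs_nonneg _) _) hp0.ne']
  calc (eLpNorm (fun ω => ∑ n, g n ω) (ENNReal.ofReal p) P).toReal
      ≤ R ^ (1/p) := by rw [hLHS]; exact hLHS2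
  _ ≤ (2 * Kros p) * (A ^ ((1:ℝ)/2) + B ^ (1/p)) := hsolve
  _ = _ := by
      congr 2
      · rw [hAdef]; congr 1; exact Finset.sum_congr rfl fun n _ => (hT2 n).symm
      · rw [hBdef]; congr 1; exact Finset.sum_congr rfl fun n _ => (hTp n).symm

end prob
end

noncomputable section

/-- Classical Rosenthal inequality, upper bound: for `2 ≤ p < ∞` there is a constant
`C_p` depending only on `p` such that for every finite sequence of independent
mean-zero random variables `(g_n)` in `L_p` on a probability space,
`‖Σ_n g_n‖_p ≤ C_p [ (Σ_n ‖g_n‖_2²)^{1/2} + (Σ_n ‖g_n‖_p^p)^{1/p} ]`. -/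
theorem rosenthal_upper (p : ℝ) (hp : 2 ≤ p) :
    ∃ C : ℝ, 0 < C ∧
      ∀ (Ω : Type) (_ : MeasurableSpace Ω) (P : Measure Ω), IsProbabilityMeasure P →
      ∀ (N : ℕ) (g : Fin N → Ω → ℝ),
        iIndepFun g P →
        (∀ n, MemLp (g n) (ENNReal.ofReal p) P) →
        (∀ n, ∫ ω, g n ω ∂P = 0) →
        (eLpNorm (fun ω => ∑ n, g n ω) (ENNReal.ofReal p) P).toReal ≤
          C * ((∑ n, ((eLpNorm (g n) 2 P).toReal) ^ (2:ℝ)) ^ ((1:ℝ)/2) +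
               (∑ n, ((eLpNorm (g n) (ENNReal.ofReal p) P).toReal) ^ p) ^ (1/p)) := by
  refine ⟨2 * Kros p, by nlinarith [Kros_ge_one hp], ?_⟩
  intro Ω mΩ P hP N g hind hmem hzero
  haveI := hP
  set g' : Fin N → Ω → ℝ := fun n => ((hmem n).1.mk (g n)) with hg'
  have hae : ∀ n, g n =ᵐ[P] g' n := fun n => (hmem n).1.ae_eq_mk
  have hmeas' : ∀ n, Measurable (g' n) := fun n =>
    (hmem n).1.stronglyMeasurable_mk.measurable
  have hmem' : ∀ n, MemLp (g' n) (ENNReal.ofReal p) P := fun n => (hmem n).ae_eq (hae n)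
  have hzero' : ∀ n, ∫ ω, g' n ω ∂P = 0 := fun n => by
    rw [← integral_congr_ae (hae n)]; exact hzero n
  have hind' := iIndepFun_of_ae_eq hind hae
  have haux := rosenthal_aux p hp Ω mΩ P hP N g' hind' hmem' hmeas' hzero'
  have hsum : (fun ω => ∑ n, g n ω) =ᵐ[P] fun ω => ∑ n, g' n ω := by
    have hall : ∀ᵐ ω ∂P, ∀ n, g n ω = g' n ω := (MeasureTheory.ae_all_iff).2 hae
    filter_upwards [hall] with ω hω
    exact Finset.sum_congr rfl fun n _ => hω n
  rw [eLpNorm_congr_ae hsum]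
  have e2 : ∀ n, eLpNorm (g n) 2 P = eLpNorm (g' n) 2 P := fun n => eLpNorm_congr_ae (hae n)
  have ep : ∀ n, eLpNorm (g n) (ENNReal.ofReal p) P = eLpNorm (g' n) (ENNReal.ofReal p) P :=
    fun n => eLpNorm_congr_ae (hae n)
  calc (eLpNorm (fun ω => ∑ n, g' n ω) (ENNReal.ofReal p) P).toReal
      ≤ (2 * Kros p) * ((∑ n, ((eLpNorm (g' n) 2 P).toReal) ^ (2:ℝ)) ^ ((1:ℝ)/2) +
           (∑ n, ((eLpNorm (g' n) (ENNReal.ofReal p) P).toReal) ^ p) ^ (1/p)) := haux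
  _ = _ := by
      congr 2
      · congr 1; exact Finset.sum_congr rfl fun n _ => by rw [e2 n]
      · congr 1; exact Finset.sum_congr rfl fun n _ => by rw [ep n]

end

end
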